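/- Let n ≥ 2 be an integer, m > 0 a real number, a ∈ ℝ, and set η = √((n−1)/m). Then the function f : {(x,t) ∈ ℝⁿ × ℝ : xₙ > 0} → ℝ defined by f(x,t) = −m·ln(cosh(η·t + a)) satisfies the quasi-Einstein PDE system for (f, m, λ) with λ = −(n−1). (In particular, (ℍⁿ × ℝ, g, ∇f, −(n−1)) is a quasi-Einstein metric with ∇f = −m·η·tanh(η·t + a)·∂ₜ.) -/

import Mathlib

open Real

/-- The index of the last coordinate `xₙ` in `Fin n`. -/
def lastIdx (n : ℕ) (hn : 2 ≤ n) : Fin n := ⟨n - 1, by omega⟩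

/-- Partial derivative of `f` in the `i`-th space coordinate at the point `p = (x, t)`. -/
noncomputable def partialX (n : ℕ) (f : (Fin n → ℝ) × ℝ → ℝ) (i : Fin n)
    (p : (Fin n → ℝ) × ℝ) : ℝ :=
  deriv (fun s => f (Function.update p.1 i s, p.2)) (p.1 i)

/-- Partial derivative of `f` in the `t` coordinate at the point `p = (x, t)`. -/
noncomputable def partialT (n : ℕ) (f : (Fin n → ℝ) × ℝ → ℝ)
    (p : (Fin n → ℝ) × ℝ) : ℝ :=
  deriv (fun s => f (p.1, s)) p.2

/-- The quasi-Einstein PDE system for `(f, m, λ)` on the half-space model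
`{(x,t) ∈ ℝⁿ × ℝ : xₙ > 0}` of `ℍⁿ × ℝ` with metric `g = xₙ⁻²·Σᵢ dxᵢ² + dt²`. -/
def QESystem (n : ℕ) (hn : 2 ≤ n) (m lam : ℝ) (f : (Fin n → ℝ) × ℝ → ℝ) : Prop :=
  ∀ p : (Fin n → ℝ) × ℝ, 0 < p.1 (lastIdx n hn) →
    -- (1)  xₙ²·∂²f/∂xᵢ² − xₙ·∂f/∂xₙ = (xₙ²/m)·(∂f/∂xᵢ)² + λ + (n−1),  i < n
    (∀ i : Fin n, (i : ℕ) < n - 1 →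
      (p.1 (lastIdx n hn)) ^ 2 * partialX n (partialX n f i) i p
        - p.1 (lastIdx n hn) * partialX n f (lastIdx n hn) p
      = (p.1 (lastIdx n hn)) ^ 2 / m * (partialX n f i p) ^ 2 + lam + ((n : ℝ) - 1)) ∧
    -- (2)  xₙ·∂f/∂xₙ + xₙ²·∂²f/∂xₙ² = (xₙ²/m)·(∂f/∂xₙ)² + λ + (n−1)
    (p.1 (lastIdx n hn) * partialX n f (lastIdx n hn) p
        + (p.1 (lastIdx n hn)) ^ 2 * partialX n (partialX n f (lastIdx n hn)) (lastIdx n hn) p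
      = (p.1 (lastIdx n hn)) ^ 2 / m * (partialX n f (lastIdx n hn) p) ^ 2
        + lam + ((n : ℝ) - 1)) ∧
    -- (3)  ∂²f/∂t² = (1/m)·(∂f/∂t)² + λ
    (partialT n (partialT n f) p = (1 / m) * (partialT n f p) ^ 2 + lam) ∧
    -- (4)  ∂²f/∂xᵢ∂xⱼ = (1/m)·(∂f/∂xᵢ)·(∂f/∂xⱼ),  i < j < n
    (∀ i j : Fin n, (i : ℕ) < (j : ℕ) → (j : ℕ) < n - 1 →
      partialX n (partialX n f j) i p = (1 / m) * partialX n f i p * partialX n f j p) ∧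
    -- (5)  xₙ²·∂²f/∂xᵢ∂xₙ + xₙ·∂f/∂xᵢ = (xₙ²/m)·(∂f/∂xᵢ)·(∂f/∂xₙ),  i < n
    (∀ i : Fin n, (i : ℕ) < n - 1 →
      (p.1 (lastIdx n hn)) ^ 2 * partialX n (partialX n f (lastIdx n hn)) i p
          + p.1 (lastIdx n hn) * partialX n f i p
        = (p.1 (lastIdx n hn)) ^ 2 / m * partialX n f i p * partialX n f (lastIdx n hn) p) ∧
    -- (6)  ∂²f/∂xᵢ∂t = (1/m)·(∂f/∂xᵢ)·(∂f/∂t),  i ≤ n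
    (∀ i : Fin n,
      partialX n (partialT n f) i p = (1 / m) * partialX n f i p * partialT n f p)

section Aux

/-- `partialX` of any function depending only on the `t`-coordinate vanishes. -/
lemma partialX_of_t_only (n : ℕ) (ψ : ℝ → ℝ) (i : Fin n) (p : (Fin n → ℝ) × ℝ) :
    partialX n (fun q => ψ q.2) i p = 0 := by
  simp [partialX]

end Aux

/-- **Example 2.** With `η = √((n−1)/m)`, the function `f(x,t) = −m·ln(cosh(η·t + a))`
satisfies the quasi-Einstein PDE system on `ℍⁿ × ℝ` with `λ = −(n−1)`. -/
theorem log_cosh_potential_is_quasiEinstein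
    (n : ℕ) (hn : 2 ≤ n) (m : ℝ) (hm : 0 < m) (a : ℝ)
    (η : ℝ) (hη : η = Real.sqrt (((n : ℝ) - 1) / m)) :
    QESystem n hn m (-((n : ℝ) - 1))
      (fun p : (Fin n → ℝ) × ℝ => -m * Real.log (Real.cosh (η * p.2 + a))) := by

  have hn1 : (1:ℝ) ≤ (n:ℝ) := by exact_mod_cast Nat.one_le_of_lt hn
  have hmη : m * η ^ 2 = (n:ℝ) - 1 := by
    have hnn : (0:ℝ) ≤ ((n:ℝ) - 1) / m := by
      apply div_nonneg (by linarith) hm.le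
    rw [hη, sq_sqrt hnn]
    field_simp
  set φ : ℝ → ℝ := fun t => -m * Real.log (Real.cosh (η * t + a)) with hφ
  have hd1 : ∀ t : ℝ, HasDerivAt φ (-(m * η) * Real.tanh (η * t + a)) t := by
    intro t
    have h1 : HasDerivAt (fun t : ℝ => η * t + a) η t := by
      simpa using ((hasDerivAt_id t).const_mul η).add_const a
    have h2 : HasDerivAt (fun t : ℝ => Real.cosh (η * t + a))
        (Real.sinh (η * t + a) * η) t := (Real.hasDerivAt_cosh _).comp t h1
    have hc : Real.cosh (η * t + a) ≠ 0 := (Real.cosh_pos _).ne'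
    have h3 := (h2.log hc).const_mul (-m)
    refine h3.congr_deriv ?_
    rw [Real.tanh_eq_sinh_div_cosh]
    ring
  have hderivφ : deriv φ = fun t => -(m * η) * Real.tanh (η * t + a) :=
    funext fun t => (hd1 t).deriv
  have hd2 : ∀ t : ℝ, HasDerivAt (fun t => -(m * η) * Real.tanh (η * t + a))
      (-(m * η ^ 2) / (Real.cosh (η * t + a)) ^ 2) t := by
    intro t
    have h1 : HasDerivAt (fun t : ℝ => η * t + a) η t := by
      simpa using ((hasDerivAt_id t).const_mul η).add_const a
    have hs : HasDerivAt (fun t : ℝ => Real.sinh (η * t + a))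
        (Real.cosh (η * t + a) * η) t := (Real.hasDerivAt_sinh _).comp t h1
    have hc2 : HasDerivAt (fun t : ℝ => Real.cosh (η * t + a))
        (Real.sinh (η * t + a) * η) t := (Real.hasDerivAt_cosh _).comp t h1
    have hcne : Real.cosh (η * t + a) ≠ 0 := (Real.cosh_pos _).ne'
    have h4 := ((hs.div hc2 hcne).const_mul (-(m * η)))
    have : (fun t : ℝ => -(m * η) * (Real.sinh (η * t + a) / Real.cosh (η * t + a)))
        = fun t : ℝ => -(m * η) * Real.tanh (η * t + a) := by
      funext t; rw [Real.tanh_eq_sinh_div_cosh]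
    simp only [Pi.div_apply] at h4
    rw [this] at h4
    refine h4.congr_deriv ?_
    have hid : Real.cosh (η * t + a) ^ 2 - Real.sinh (η * t + a) ^ 2 = 1 :=
      Real.cosh_sq_sub_sinh_sq _
    field_simp
    nlinarith [hid]
  intro p hp
  have hX : ∀ (i : Fin n),
      partialX n (fun p : (Fin n → ℝ) × ℝ => -m * Real.log (Real.cosh (η * p.2 + a))) i p
        = 0 := fun i => partialX_of_t_only n φ i p
  have hXX : ∀ (i j : Fin n),
      partialX n (partialX n
        (fun p : (Fin n → ℝ) × ℝ => -m * Real.log (Real.cosh (η * p.2 + a))) j) i p = 0 := by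
    intro i j
    have : partialX n (fun p : (Fin n → ℝ) × ℝ => -m * Real.log (Real.cosh (η * p.2 + a))) j
        = fun q => (0:ℝ) := funext fun q => partialX_of_t_only n φ j q
    rw [this]
    exact partialX_of_t_only n (fun _ => 0) i p
  have hT : ∀ q : (Fin n → ℝ) × ℝ,
      partialT n (fun p : (Fin n → ℝ) × ℝ => -m * Real.log (Real.cosh (η * p.2 + a))) q
        = -(m * η) * Real.tanh (η * q.2 + a) := by
    intro q
    show deriv (fun s => -m * Real.log (Real.cosh (η * s + a))) q.2 = _
    exact (hd1 q.2).deriv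
  have hTT : partialT n (partialT n
      (fun p : (Fin n → ℝ) × ℝ => -m * Real.log (Real.cosh (η * p.2 + a)))) p
        = -(m * η ^ 2) / (Real.cosh (η * p.2 + a)) ^ 2 := by
    have heq : (fun s => partialT n
        (fun p : (Fin n → ℝ) × ℝ => -m * Real.log (Real.cosh (η * p.2 + a))) (p.1, s))
        = fun s => -(m * η) * Real.tanh (η * s + a) := by
      funext s; exact hT (p.1, s)
    rw [partialT, heq]
    exact (hd2 p.2).deriv
  have hXT : ∀ (i : Fin n),
      partialX n (partialT n
        (fun p : (Fin n → ℝ) × ℝ => -m * Real.log (Real.cosh (η * p.2 + a)))) i p = 0 := by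
    intro i
    have : partialT n (fun p : (Fin n → ℝ) × ℝ => -m * Real.log (Real.cosh (η * p.2 + a)))
        = fun q => -(m * η) * Real.tanh (η * q.2 + a) := funext hT
    rw [this]
    exact partialX_of_t_only n (fun s => -(m * η) * Real.tanh (η * s + a)) i p
  refine ⟨fun i _ => ?_, ?_, ?_, fun i j _ _ => ?_, fun i _ => ?_, fun i => ?_⟩
  · simp only [hXX, hX]; ring
  · simp only [hXX, hX]; ring
  · rw [hTT, hT]
    have hcne : Real.cosh (η * p.2 + a) ≠ 0 := (Real.cosh_pos _).ne'
    have hid : Real.cosh (η * p.2 + a) ^ 2 - Real.sinh (η * p.2 + a) ^ 2 = 1 :=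
      Real.cosh_sq_sub_sinh_sq _
    rw [Real.tanh_eq_sinh_div_cosh]
    field_simp
    linear_combination (-(1 + Real.sinh (η * p.2 + a) ^ 2)) * hmη
      + ((↑n : ℝ) - 1) * hid
  · simp only [hXX, hX]; ring
  · simp only [hXX, hX]; ring
  · simp only [hXT, hX]; ring
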